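/- Let R be a commutative ring and L, S, c_1, c_2 ∈ R. In R[[t]], the coefficient of t^3 in 12(Lt + 2LSt^2 − S^2t^2) · ((1 + St)(1 + 6Lt − 3St))^{-1} · (1 + c_1 t + c_2 t^2) equals 12(−6c_1L^2 + 4c_1LS − c_1S^2 + c_2L + 36L^3 − 42L^2S + 17LS^2 − 2S^3). -/

import Mathlib

open PowerSeries

private lemma inv_coeffs_aux {R : Type*} [CommRing R] (a b : R) (h : R⟦X⟧)
    (h1 : (C (R := R) 1 + C (R := R) a * X + C (R := R) b * X ^ 2) * h = 1) :
    constantCoeff (R := R) h = 1 ∧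
    coeff (R := R) 1 h = -a ∧
    coeff (R := R) 2 h = a * a - b := by
  have e0 := congrArg (coeff (R := R) 0) h1
  have e1 := congrArg (coeff (R := R) 1) h1
  have e2 := congrArg (coeff (R := R) 2) h1
  rw [coeff_mul, Finset.Nat.sum_antidiagonal_eq_sum_range_succ_mk] at e0 e1 e2
  simp only [Finset.sum_range_succ, Finset.sum_range_zero, map_add, coeff_C_mul,
    coeff_one, coeff_C, coeff_X_pow, coeff_X, zero_add] at e0 e1 e2
  norm_num at e0 e1 e2
  refine ⟨e0, ?_, ?_⟩
  · linear_combination e1 - a * e0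
  · linear_combination e2 - a * e1 + (a * a - b) * e0

private lemma coeff3_aux {R : Type*} [CommRing R] (n₁ n₂ a b g₁ g₂ : R) (h : R⟦X⟧)
    (h1 : (C (R := R) 1 + C (R := R) a * X + C (R := R) b * X ^ 2) * h = 1) :
    coeff (R := R) 3 ((C (R := R) n₁ * X + C (R := R) n₂ * X ^ 2) * h * (C (R := R) 1 + C (R := R) g₁ * X + C (R := R) g₂ * X ^ 2))
      = n₁ * (a * a - b) - n₁ * g₁ * a + n₁ * g₂ - n₂ * a + n₂ * g₁ := by
  obtain ⟨e0, e1, e2⟩ := inv_coeffs_aux a b h h1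
  rw [coeff_mul, Finset.Nat.sum_antidiagonal_eq_sum_range_succ_mk]
  simp only [Finset.sum_range_succ, Finset.sum_range_zero, coeff_mul,
    Finset.Nat.sum_antidiagonal_eq_sum_range_succ_mk]
  simp only [Finset.sum_range_succ, Finset.sum_range_zero, map_add, coeff_C_mul,
    coeff_one, coeff_C, coeff_X_pow, coeff_X, zero_add]
  norm_num
  rw [e0, e1, e2]
  ring

set_option maxHeartbeats 800000 in
/-- SU(3)/USp(4)/G₂-model generating function: coefficient of `t^3`. -/
theorem euler_su3_dim3 {R : Type*} [CommRing R] (L S c₁ c₂ : R) :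
    (PowerSeries.coeff (R := R) 3)
      (12 * (C (R := R) L * X + 2 * C (R := R) L * C (R := R) S * X ^ 2 - C (R := R) S ^ 2 * X ^ 2) *
        Ring.inverse ((1 + C (R := R) S * X) * (1 + 6 * C (R := R) L * X - 3 * C (R := R) S * X)) *
        (1 + C (R := R) c₁ * X + C (R := R) c₂ * X ^ 2))
      = 12 * (-6 * c₁ * L ^ 2 + 4 * c₁ * L * S - c₁ * S ^ 2 + c₂ * L
          + 36 * L ^ 3 - 42 * L ^ 2 * S + 17 * L * S ^ 2 - 2 * S ^ 3) := by
  set u : R⟦X⟧ := (1 + C (R := R) S * X) * (1 + 6 * C (R := R) L * X - 3 * C (R := R) S * X) with hu_def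
  have hu2 : u = C (R := R) 1 + C (R := R) (6 * L - 2 * S) * X + C (R := R) (6 * L * S - 3 * S * S) * X ^ 2 := by
    simp only [hu_def, map_mul, map_sub, map_add, map_ofNat, map_one]; ring
  have hcu : constantCoeff (R := R) u = 1 := by
    rw [hu_def]; simp
  have hu : IsUnit u := by
    rw [PowerSeries.isUnit_iff_constantCoeff, hcu]; exact isUnit_one
  have h1 : u * Ring.inverse u = 1 := Ring.mul_inverse_cancel u hu
  set h : R⟦X⟧ := Ring.inverse u with hh
  rw [hu2] at h1
  have hrw : 12 * (C (R := R) L * X + 2 * C (R := R) L * C (R := R) S * X ^ 2 - C (R := R) S ^ 2 * X ^ 2) * h *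
        (1 + C (R := R) c₁ * X + C (R := R) c₂ * X ^ 2)
      = (C (R := R) (12 * L) * X + C (R := R) (24 * L * S - 12 * S * S) * X ^ 2) * h *
        (C (R := R) 1 + C (R := R) c₁ * X + C (R := R) c₂ * X ^ 2) := by
    simp only [map_mul, map_sub, map_ofNat, map_one]; ring
  rw [hrw, coeff3_aux (12 * L) (24 * L * S - 12 * S * S) (6 * L - 2 * S)
    (6 * L * S - 3 * S * S) c₁ c₂ h h1]
  ring
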